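/- There exists an ideal I on ω extending the ideal FIN of finite sets such that the quotient Boolean algebra P(ω)/I has hereditary independence 𝔠: for every nonzero b ∈ P(ω)/I and every family A of fewer than 𝔠 elements strictly between 0 and b, there exists c with 0 < c < b such that a ∧ c ≠ 0 ≠ a \ c for all a ∈ A. -/

import Mathlib

open Set TopologicalSpace Cardinal

namespace HerIndAux

noncomputable section

/-- Step function determined by a finite list of rational intervals. -/
def stepFun (L : List (ℚ × ℚ)) : ℝ → Bool :=
  fun r => decide (∃ pq ∈ L, (pq.1 : ℝ) < r ∧ r < (pq.2 : ℝ))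

lemma exists_hit (x : ℝ → Bool) (F : Finset ℝ) :
    ∃ L : List (ℚ × ℚ), ∀ i ∈ F, stepFun L i = x i := by
  have key : ∀ r : ℝ, r ∈ F → ∃ pq : ℚ × ℚ, ((pq.1 : ℝ) < r ∧ r < (pq.2 : ℝ)) ∧
      ∀ s ∈ F, (pq.1 : ℝ) < s → s < (pq.2 : ℝ) → s = r := by
    intro r hr
    obtain ⟨δ, hδpos, hδ⟩ : ∃ δ : ℝ, 0 < δ ∧ ∀ s ∈ F.erase r, δ ≤ |s - r| := by
      by_cases h : (F.erase r).Nonempty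
      · obtain ⟨s0, hs0, hmin⟩ := (F.erase r).exists_min_image (fun s => |s - r|) h
        have hne : s0 ≠ r := Finset.ne_of_mem_erase hs0
        exact ⟨|s0 - r|, abs_pos.2 (sub_ne_zero.2 hne), hmin⟩
      · exact ⟨1, one_pos, fun s hs => absurd ⟨s, hs⟩ h⟩
    obtain ⟨p, hp1, hp2⟩ := exists_rat_btwn (show r - δ < r by linarith)
    obtain ⟨q, hq1, hq2⟩ := exists_rat_btwn (show r < r + δ by linarith)
    refine ⟨(p, q), ⟨hp2, hq1⟩, fun s hs h1 h2 => ?_⟩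
    by_contra hne
    have hsE : s ∈ F.erase r := Finset.mem_erase.2 ⟨hne, hs⟩
    have h3 := hδ s hsE
    have h4 : |s - r| < δ := abs_sub_lt_iff.2 ⟨by linarith, by linarith⟩
    linarith
  choose! g hg1 hg2 using key
  refine ⟨(F.filter (fun r => x r = true)).toList.map g, fun i hi => ?_⟩
  rcases hxi : x i with _ | _
  · -- x i = false
    apply decide_eq_false
    rintro ⟨pq, hmem, hlt1, hlt2⟩
    obtain ⟨r, hrL, rfl⟩ := List.mem_map.1 hmem
    rw [Finset.mem_toList, Finset.mem_filter] at hrL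
    have heq := hg2 r hrL.1 i hi hlt1 hlt2
    rw [heq, hrL.2] at hxi
    exact absurd hxi (by simp)
  · -- x i = true
    apply decide_eq_true
    exact ⟨g i, List.mem_map.2 ⟨i, Finset.mem_toList.2 (Finset.mem_filter.2 ⟨hi, hxi⟩), rfl⟩,
      (hg1 i hi).1, (hg1 i hi).2⟩

/-- An enumeration of a countable dense set in the Cantor cube `ℝ → Bool`. -/
def d : ℕ → ℝ → Bool :=
  fun n => stepFun ((exists_surjective_nat (List (ℚ × ℚ))).choose n)

lemma d_hit (x : ℝ → Bool) (F : Finset ℝ) : ∃ n, ∀ i ∈ F, d n i = x i := by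
  obtain ⟨L, hL⟩ := exists_hit x F
  obtain ⟨n, hn⟩ := (exists_surjective_nat (List (ℚ × ℚ))).choose_spec L
  exact ⟨n, by simpa [d, hn] using hL⟩

/-- The ideal: sets whose `d`-image is nowhere dense in the Cantor cube. -/
def I : Set (Set ℕ) := {A | interior (closure (d '' A)) = ∅}

lemma I_mono {A B : Set ℕ} (hA : A ∈ I) (hBA : B ⊆ A) : B ∈ I := by
  have h : interior (closure (d '' B)) ⊆ interior (closure (d '' A)) :=
    interior_mono (closure_mono (image_mono hBA))
  exact eq_empty_of_subset_empty (hA ▸ h)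

lemma interior_union_closed {α : Type*} [TopologicalSpace α] {s t : Set α}
    (hs : IsClosed s) (h1 : interior s = ∅) (h2 : interior t = ∅) :
    interior (s ∪ t) = ∅ := by
  have key : interior (s ∪ t) \ s ⊆ interior t := by
    apply interior_maximal
    · intro y hy
      rcases interior_subset hy.1 with h | h
      · exact absurd h hy.2
      · exact h
    · exact isOpen_interior.sdiff hs
  rw [h2] at key
  have key2 : interior (s ∪ t) ⊆ s := fun y hy =>
    Classical.byContradiction fun hns => (key ⟨hy, hns⟩).elim
  have h3 : interior (s ∪ t) ⊆ interior s := interior_maximal key2 isOpen_interior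
  rw [h1] at h3
  exact eq_empty_of_subset_empty h3

lemma I_union {A B : Set ℕ} (hA : A ∈ I) (hB : B ∈ I) : A ∪ B ∈ I := by
  show interior (closure (d '' (A ∪ B))) = ∅
  rw [image_union, closure_union]
  have hB' : interior (closure (d '' B)) = ∅ := hB
  have h2 : interior (closure (closure (d '' B))) = ∅ := by rwa [closure_closure]
  calc interior (closure (d '' A) ∪ closure (d '' B))
      = ∅ := interior_union_closed isClosed_closure hA hB'

/-- The basic-open cylinder determined by finitely many coordinates of `x`. -/
def cyl (G : Finset ℝ) (x : ℝ → Bool) : Set (ℝ → Bool) := {y | ∀ i ∈ G, y i = x i}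

lemma cyl_isOpen (G : Finset ℝ) (x : ℝ → Bool) : IsOpen (cyl G x) := by
  have h : cyl G x = (G : Set ℝ).pi (fun i => {x i}) := by
    ext y; simp [cyl, Set.mem_pi]
  rw [h]
  exact isOpen_set_pi G.finite_toSet (fun i _ => isOpen_discrete _)

lemma mem_closure_image {S : Set ℕ} {x : ℝ → Bool}
    (h : ∀ F : Finset ℝ, ∃ n ∈ S, ∀ i ∈ F, d n i = x i) : x ∈ closure (d '' S) := by
  rw [mem_closure_iff]
  intro o ho hxo
  obtain ⟨v, hvB, hxv, hvo⟩ :=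
    (isTopologicalBasis_pi (fun _ : ℝ => isTopologicalBasis_singletons Bool)).exists_subset_of_mem_open
      hxo ho
  obtain ⟨U, F, hU, rfl⟩ := hvB
  obtain ⟨n, hnS, hn⟩ := h F
  refine ⟨d n, hvo ?_, ⟨n, hnS, rfl⟩⟩
  intro i hiF
  rw [hn i hiF]
  exact hxv i hiF

lemma mem_closure_split {S : Set ℕ} {x : ℝ → Bool} (hx : x ∈ closure (d '' S))
    (γ : ℝ) (ε : Bool) (hxγ : x γ = ε) :
    x ∈ closure (d '' {n | n ∈ S ∧ d n γ = ε}) := by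
  rw [mem_closure_iff] at hx ⊢
  intro o ho hxo
  have hopen : IsOpen {y : ℝ → Bool | y γ = ε} := by
    have : {y : ℝ → Bool | y γ = ε} = (fun y : ℝ → Bool => y γ) ⁻¹' {ε} := rfl
    rw [this]
    exact (continuous_apply γ).isOpen_preimage _ (isOpen_discrete _)
  obtain ⟨z, hz, hzim⟩ := hx (o ∩ {y | y γ = ε}) (ho.inter hopen) ⟨hxo, hxγ⟩
  obtain ⟨n, hnS, rfl⟩ := hzim
  exact ⟨d n, hz.1, ⟨n, ⟨hnS, hz.2⟩, rfl⟩⟩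

lemma exists_cyl {S : Set ℕ} (h : S ∉ I) :
    ∃ (G : Finset ℝ) (x : ℝ → Bool), cyl G x ⊆ closure (d '' S) := by
  obtain ⟨x, hx⟩ := nonempty_iff_ne_empty.2 h
  obtain ⟨v, hvB, hxv, hvo⟩ :=
    (isTopologicalBasis_pi (fun _ : ℝ => isTopologicalBasis_singletons Bool)).exists_subset_of_mem_open
      hx isOpen_interior
  obtain ⟨U, F, hU, rfl⟩ := hvB
  refine ⟨F, x, fun y hy => interior_subset (hvo ?_)⟩
  intro i hiF
  rw [hy i hiF]
  exact hxv i hiF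

lemma split_not_mem {S : Set ℕ} {G : Finset ℝ} {x : ℝ → Bool}
    (hsub : cyl G x ⊆ closure (d '' S)) {γ : ℝ} (hγ : γ ∉ G) (ε : Bool) :
    {n | n ∈ S ∧ d n γ = ε} ∉ I := by
  set C : Set (ℝ → Bool) := cyl G x ∩ {y | y γ = ε} with hC
  have hCopen : IsOpen C := by
    apply (cyl_isOpen G x).inter
    have : {y : ℝ → Bool | y γ = ε} = (fun y : ℝ → Bool => y γ) ⁻¹' {ε} := rfl
    rw [this]
    exact (continuous_apply γ).isOpen_preimage _ (isOpen_discrete _)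
  have hCne : C.Nonempty := by
    refine ⟨Function.update x γ ε, ?_, ?_⟩
    · intro i hiG
      refine Function.update_of_ne ?_ _ _
      intro h; subst h; exact hγ hiG
    · exact Function.update_self γ ε x
  have hCsub : C ⊆ closure (d '' {n | n ∈ S ∧ d n γ = ε}) := by
    intro y hy
    exact mem_closure_split (hsub hy.1) γ ε hy.2
  intro hmem
  have : C ⊆ interior (closure (d '' {n | n ∈ S ∧ d n γ = ε})) :=
    interior_maximal hCsub hCopen
  rw [hmem] at this
  exact hCne.ne_empty (eq_empty_of_subset_empty this)

lemma not_mem_up {A B : Set ℕ} (hA : A ∉ I) (hAB : A ⊆ B) : B ∉ I :=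
  fun h => hA (I_mono h hAB)

lemma finite_mem_I {A : Set ℕ} (hA : A.Finite) : A ∈ I := by
  show interior (closure (d '' A)) = ∅
  have hfin : (d '' A).Finite := hA.image _
  rw [hfin.isClosed.closure_eq]
  by_contra h
  obtain ⟨x, hx⟩ := nonempty_iff_ne_empty.2 h
  obtain ⟨v, hvB, hxv, hvo⟩ :=
    (isTopologicalBasis_pi (fun _ : ℝ => isTopologicalBasis_singletons Bool)).exists_subset_of_mem_open
      hx isOpen_interior
  obtain ⟨U, F, hU, rfl⟩ := hvB
  have hcyl : cyl F x ⊆ d '' A := by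
    intro y hy
    refine interior_subset (hvo ?_)
    intro i hiF
    rw [hy i hiF]
    exact hxv i hiF
  -- but the cylinder is infinite
  have hinf : (cyl F x).Infinite := by
    have hcompl : ((F : Set ℝ)ᶜ).Infinite := F.finite_toSet.infinite_compl
    have : Set.Infinite ((fun r : ℝ => Function.update x r (!(x r))) '' ((F : Set ℝ)ᶜ)) := by
      apply Set.Infinite.image ?_ hcompl
      intro r hr r' hr' hrr'
      by_contra hne
      have h1 := congrFun hrr' r
      simp only [Function.update_self, Function.update_of_ne hne] at h1
      exact absurd h1 (by simp)
    apply Set.Infinite.mono ?_ this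
    rintro y ⟨r, hr, rfl⟩
    intro i hiF
    refine Function.update_of_ne ?_ _ _
    intro h; subst h; exact hr (Finset.mem_coe.2 hiF)
  exact hinf (hfin.subset hcyl)

lemma univ_not_mem : (Set.univ : Set ℕ) ∉ I := by
  show ¬ (interior (closure (d '' Set.univ)) = ∅)
  have hdense : closure (d '' Set.univ) = Set.univ := by
    apply Set.eq_univ_of_forall
    intro x
    apply mem_closure_image
    intro F
    obtain ⟨n, hn⟩ := d_hit x F
    exact ⟨n, trivial, hn⟩
  rw [hdense, interior_univ]
  simp

end

end HerIndAux

/-- There is an ideal I on ω extending FIN such that P(ω)/I has hereditary independence 𝔠. -/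
theorem exists_ideal_hereditary_independence :
    ∃ I : Set (Set ℕ),
      (∀ A ∈ I, ∀ B : Set ℕ, B ⊆ A → B ∈ I) ∧
      (∀ A ∈ I, ∀ B ∈ I, A ∪ B ∈ I) ∧
      (∀ A : Set ℕ, A.Finite → A ∈ I) ∧
      (Set.univ : Set ℕ) ∉ I ∧
      (∀ b : Set ℕ, b ∉ I →
        ∀ 𝒜 : Set (Set ℕ), Cardinal.mk 𝒜 < Cardinal.continuum →
        (∀ a ∈ 𝒜, a ∉ I ∧ a \ b ∈ I ∧ b \ a ∉ I) →
        ∃ c : Set ℕ, c ∉ I ∧ c \ b ∈ I ∧ b \ c ∉ I ∧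
          ∀ a ∈ 𝒜, a ∩ c ∉ I ∧ a \ c ∉ I) := by
  classical
  refine ⟨HerIndAux.I, fun A hA B hBA => HerIndAux.I_mono hA hBA,
    fun A hA B hB => HerIndAux.I_union hA hB,
    fun A hA => HerIndAux.finite_mem_I hA, HerIndAux.univ_not_mem, ?_⟩
  intro b hb 𝒜 h𝒜card h𝒜mem
  -- witness cylinder for b
  obtain ⟨Gb, xb, hGb⟩ := HerIndAux.exists_cyl hb
  -- for each a ∈ 𝒜, a ∩ b ∉ I, with witness cylinder
  have hab : ∀ a : 𝒜, (a : Set ℕ) ∩ b ∉ HerIndAux.I := by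
    rintro ⟨a, ha⟩
    obtain ⟨ha1, ha2, _⟩ := h𝒜mem a ha
    intro hmem
    apply ha1
    have hsub : a ⊆ (a ∩ b) ∪ (a \ b) := by
      intro n hn
      by_cases hnb : n ∈ b
      · exact Or.inl ⟨hn, hnb⟩
      · exact Or.inr ⟨hn, hnb⟩
    exact HerIndAux.I_mono (HerIndAux.I_union hmem ha2) hsub
  have hwit : ∀ a : 𝒜, ∃ (G : Finset ℝ) (x : ℝ → Bool),
      HerIndAux.cyl G x ⊆ closure (HerIndAux.d '' ((a : Set ℕ) ∩ b)) :=
    fun a => HerIndAux.exists_cyl (hab a)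
  choose G w hw using hwit
  -- choose a fresh coordinate γ
  set T : Set ℝ := (Gb : Set ℝ) ∪ ⋃ a : 𝒜, (G a : Set ℝ) with hT
  have hTcard : Cardinal.mk T < Cardinal.continuum := by
    have h1 : Cardinal.mk ((Gb : Set ℝ)) < Cardinal.aleph0 := Gb.finite_toSet.lt_aleph0
    have h2 : Cardinal.mk (⋃ a : 𝒜, (G a : Set ℝ)) ≤ Cardinal.mk 𝒜 * Cardinal.aleph0 := by
      refine (Cardinal.mk_iUnion_le _).trans (mul_le_mul_right ?_ _)
      exact ciSup_le' fun a => ((G a).finite_toSet.lt_aleph0).le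
    calc Cardinal.mk T ≤ Cardinal.mk ((Gb : Set ℝ)) + Cardinal.mk (⋃ a : 𝒜, (G a : Set ℝ)) :=
          Cardinal.mk_union_le _ _
      _ < Cardinal.continuum :=
          Cardinal.add_lt_of_lt Cardinal.aleph0_le_continuum
            (h1.trans Cardinal.aleph0_lt_continuum)
            (h2.trans_lt (Cardinal.mul_lt_of_lt Cardinal.aleph0_le_continuum h𝒜card
              Cardinal.aleph0_lt_continuum))
  have hTne : T ≠ Set.univ := by
    intro h
    rw [h, Cardinal.mk_univ, Cardinal.mk_real] at hTcard
    exact lt_irrefl _ hTcard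
  obtain ⟨γ, hγ⟩ := (Set.ne_univ_iff_exists_notMem T).1 hTne
  have hγb : γ ∉ Gb := fun h => hγ (Set.mem_union_left _ h)
  have hγa : ∀ a : 𝒜, γ ∉ G a := fun a h =>
    hγ (Set.mem_union_right _ (Set.mem_iUnion.2 ⟨a, h⟩))
  -- define c
  refine ⟨{n | n ∈ b ∧ HerIndAux.d n γ = false}, ?_, ?_, ?_, ?_⟩
  · exact HerIndAux.split_not_mem hGb hγb false
  · have : {n | n ∈ b ∧ HerIndAux.d n γ = false} \ b = ∅ := by
      ext n; simp only [Set.mem_diff, Set.mem_setOf_eq, Set.mem_empty_iff_false, iff_false]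
      rintro ⟨⟨h1, _⟩, h2⟩; exact h2 h1
    rw [this]
    exact HerIndAux.finite_mem_I Set.finite_empty
  · apply HerIndAux.not_mem_up (HerIndAux.split_not_mem hGb hγb true)
    rintro n ⟨hnb, hnγ⟩
    refine ⟨hnb, ?_⟩
    rintro ⟨-, h⟩
    rw [hnγ] at h
    exact absurd h (by simp)
  · intro a ha
    constructor
    · apply HerIndAux.not_mem_up (HerIndAux.split_not_mem (hw ⟨a, ha⟩) (hγa ⟨a, ha⟩) false)
      rintro n ⟨⟨hna, hnb⟩, hnγ⟩
      exact ⟨hna, hnb, hnγ⟩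
    · apply HerIndAux.not_mem_up (HerIndAux.split_not_mem (hw ⟨a, ha⟩) (hγa ⟨a, ha⟩) true)
      rintro n ⟨⟨hna, hnb⟩, hnγ⟩
      refine ⟨hna, ?_⟩
      rintro ⟨-, h⟩
      rw [hnγ] at h
      exact absurd h (by simp)
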